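/- Let X be a real inner product space and x, y, v, z ∈ X. Then the 3-iterated 2-inner product satisfies (x,y|v,z)_* = ⟨z,z⟩ · ⟨x,y|v,z⟩, i.e. (x,y|v,z)_* equals ⟨z,z⟩ times the determinant of the 3×3 matrix with rows (⟨x,y⟩, ⟨x,v⟩, ⟨x,z⟩), (⟨v,y⟩, ⟨v,v⟩, ⟨v,z⟩), (⟨z,y⟩, ⟨z,v⟩, ⟨z,z⟩). -/
import Mathlib


open scoped InnerProductSpace

/-- The `n`-iterated 2-inner product `(x, y | xₙ, …, x₂)_*` on a real inner
product space, where the list `l = [xₙ, x_{n-1}, …, x₂]` collects the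
conditioning vectors (so `n = l.length + 1`).  For the empty list it is the
inner product `⟪x, y⟫` (the convention for `n = 1`), and
`(x, y | xₙ, …, x₂)_* = (x,y|x_{n-1},…,x₂)_* (xₙ,xₙ|x_{n-1},…,x₂)_*
  - (x,xₙ|x_{n-1},…,x₂)_* (xₙ,y|x_{n-1},…,x₂)_*`.
In particular `(x,y|z)_* = ⟪x,y⟫⟪z,z⟫ - ⟪x,z⟫⟪z,y⟫`. -/
noncomputable def iter2 {X : Type*} [NormedAddCommGroup X] [InnerProductSpace ℝ X] :
    X → X → List X → ℝ
  | x, y, [] => ⟪x, y⟫_ℝ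
  | x, y, (z :: l) => iter2 x y l * iter2 z z l - iter2 x z l * iter2 z y l

/-- The 3-iterated 2-inner product in terms of the standard 3-inner product:
`(x, y | v, z)_* = ⟪z, z⟫ ⟨x, y | v, z⟩`, where `⟨x, y | v, z⟩` is the
determinant of the `3 × 3` matrix with rows `(⟪x,y⟫, ⟪x,v⟫, ⟪x,z⟫)`,
`(⟪v,y⟫, ⟪v,v⟫, ⟪v,z⟫)`, `(⟪z,y⟫, ⟪z,v⟫, ⟪z,z⟫)`. -/
theorem iter2_three_eq {X : Type*} [NormedAddCommGroup X] [InnerProductSpace ℝ X]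
    (x y v z : X) :
    iter2 x y [v, z] =
      ⟪z, z⟫_ℝ *
        Matrix.det !![⟪x, y⟫_ℝ, ⟪x, v⟫_ℝ, ⟪x, z⟫_ℝ;
                      ⟪v, y⟫_ℝ, ⟪v, v⟫_ℝ, ⟪v, z⟫_ℝ;
                      ⟪z, y⟫_ℝ, ⟪z, v⟫_ℝ, ⟪z, z⟫_ℝ] := by
  simp [iter2, Matrix.det_fin_three, real_inner_comm z x, real_inner_comm z v,
    real_inner_comm v x]
  ring
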